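/- Let n ≥ 1 and u ∈ K_∞ with |u|_∞ < q^n. Work in the ring R := K_∞[[t]] of formal power series over K_∞, equipped with the product topology on coefficients. For i ∈ ℕ set g_i := u^{q^{i+1}} · ((C(θ^{q^{i+1}}) − t)⁻¹)^n ∈ R, where the inverse exists since the constant term θ^{q^{i+1}} is a nonzero element of the field K_∞. Then: (a) the family (g_i)_{i∈ℕ} is summable in R; and (b) its sum 𝓛 := ∑'_{i∈ℕ} g_i satisfies (t − C(θ^q))^n · (𝓛 − Φ(𝓛)) = C((−1)^n · u^q), where Φ : R → R is the ring homomorphism raising each coefficient to its q-th power. (This is the once-twisted form of the Frobenius difference equation 𝓛_{u,n}^{(−1)} = (−1)^n u/(t−θ)^n + 𝓛_{u,n} satisfied by the t-deformation 𝓛_{u,n} = ∑_{i≥1} u^{q^i}/(θ^{q^i} − t)^n of the n-th Kochubei polylogarithm.) -/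

import Mathlib

open FunctionField
open scoped Multiplicative

/-- The canonical ring homomorphism from `K = 𝔽_q(θ)` into its completion
`K_∞ = 𝔽_q((1/θ))` at the infinite place. -/
noncomputable def ratFuncToFqtInfty (Fq : Type*) [Field Fq] [DecidableEq (RatFunc Fq)] :
    RatFunc Fq →+* RatFunc.CompletionAtInfty Fq :=
  letI := RatFunc.inftyValued Fq
  UniformSpace.Completion.coeRingHom

section Aux

open Multiplicative Filter

variable (Fq : Type*) [Field Fq] [DecidableEq (RatFunc Fq)]

noncomputable instance : CompleteSpace (RatFunc.CompletionAtInfty Fq) := by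
  letI := RatFunc.inftyValued Fq
  exact (UniformSpace.Completion.completeSpace (RatFunc Fq) : _)

theorem aux_mem_nhds_zero {U : Set (RatFunc.CompletionAtInfty Fq)} (hU : U ∈ nhds 0) :
    ∃ γ : (WithZero (Multiplicative ℤ))ˣ,
      {x | Valued.v x < (γ : WithZero (Multiplicative ℤ))} ⊆ U := by
  obtain ⟨γ, hγ⟩ := Valued.mem_nhds_zero.mp hU
  exact ⟨Units.mk0 _ (MonoidWithZeroHom.ValueGroup₀.embedding_unit_ne_zero γ),
    fun x hx => hγ ((Valuation.restrict_lt_iff_lt_embedding _).mpr hx)⟩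

instance : NonarchimedeanAddGroup (RatFunc.CompletionAtInfty Fq) where
  is_nonarchimedean := by
    intro U hU
    obtain ⟨γ, hγ⟩ := Valued.mem_nhds_zero.mp hU
    exact ⟨⟨(Valued.v.restrict).ltAddSubgroup γ, Valued.isOpen_ball _ _⟩, hγ⟩

theorem aux_inv_C_sub_X {K : Type*} [Field K] {a : K} (ha : a ≠ 0) :
    (PowerSeries.C a - PowerSeries.X)⁻¹ = PowerSeries.mk fun k => a⁻¹ ^ (k + 1) := by
  have hc : PowerSeries.constantCoeff (PowerSeries.C a - PowerSeries.X) ≠ 0 := by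
    simpa using ha
  rw [PowerSeries.inv_eq_iff_mul_eq_one hc]
  have hrw : (PowerSeries.mk fun k => a⁻¹ ^ (k + 1)) * (PowerSeries.C a - PowerSeries.X)
      = PowerSeries.C a * (PowerSeries.mk fun k => a⁻¹ ^ (k + 1))
        - PowerSeries.X * (PowerSeries.mk fun k => a⁻¹ ^ (k + 1)) := by ring
  rw [hrw]
  ext k
  cases k with
  | zero => simp [ha]
  | succ k =>
      rw [map_sub, PowerSeries.coeff_C_mul, PowerSeries.coeff_succ_X_mul,
        PowerSeries.coeff_mk, PowerSeries.coeff_mk]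
      have h1 : a * a⁻¹ ^ (k + 1 + 1) = a⁻¹ ^ (k + 1) := by
        rw [pow_succ']
        rw [← mul_assoc, mul_inv_cancel₀ ha, one_mul]
      rw [h1, sub_self]
      simp [PowerSeries.coeff_one]

theorem aux_coeff_pow_le {K Γ : Type*} [Field K] [LinearOrderedCommGroupWithZero Γ]
    (v : Valuation K Γ) (b : K) (n : ℕ) : ∀ k,
    v (PowerSeries.coeff k ((PowerSeries.mk fun j => b ^ (j + 1)) ^ n)) ≤ v b ^ (k + n) := by
  induction n with
  | zero =>
    intro k
    cases k with
    | zero => simp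
    | succ k => simp [PowerSeries.coeff_one]
  | succ n ih =>
    intro k
    rw [pow_succ, PowerSeries.coeff_mul]
    apply v.map_sum_le
    intro pr hpr
    replace hpr : pr.1 + pr.2 = k := Finset.HasAntidiagonal.mem_antidiagonal.mp hpr
    rw [v.map_mul, PowerSeries.coeff_mk, v.map_pow]
    refine le_trans (mul_le_mul' (ih pr.1) le_rfl) ?_
    rw [← pow_add]
    have h : pr.1 + n + (pr.2 + 1) = k + (n + 1) := by omega
    rw [h]

theorem aux_hasSum_iff {K : Type*} [Semiring K] [TopologicalSpace K]
    {ι : Type*} (f : ι → PowerSeries K) (S : PowerSeries K) :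
    letI : TopologicalSpace (PowerSeries K) :=
      TopologicalSpace.induced (fun φ (k : ℕ) => (PowerSeries.coeff k) φ) inferInstance
    (HasSum f S ↔ ∀ k, HasSum (fun i => PowerSeries.coeff k (f i)) (PowerSeries.coeff k S)) := by
  letI : TopologicalSpace (PowerSeries K) :=
    TopologicalSpace.induced (fun φ (k : ℕ) => (PowerSeries.coeff k) φ) inferInstance
  rw [HasSum, nhds_induced, Filter.tendsto_comap_iff]
  have heq : ((fun φ (k : ℕ) => (PowerSeries.coeff k) φ) ∘ fun s : Finset ι => ∑ i ∈ s, f i)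
      = fun (s : Finset ι) (k : ℕ) => ∑ i ∈ s, PowerSeries.coeff k (f i) := by
    funext s k; simp [Function.comp, map_sum]
  rw [heq, tendsto_pi_nhds]
  exact Iff.rfl

end Aux

/-- Let `n ≥ 1` and `u ∈ K_∞` with `|u|_∞ < q^n`. In the power series
ring `R = K_∞[[t]]` with the product topology on coefficients, the family
`g_i = u^{q^{i+1}} · ((θ^{q^{i+1}} - t)⁻¹)^n` is summable, and its sum `𝓛` satisfies the
twisted Frobenius difference equation
`(t - θ^q)^n · (𝓛 - Φ(𝓛)) = (-1)^n u^q`, where `Φ` raises each coefficient to its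
`q`-th power. -/
theorem tDeformation_summable_and_difference_equation
    (Fq : Type*) [Field Fq] [Fintype Fq] [DecidableEq (RatFunc Fq)]
    (p ℓ q : ℕ) [Fact p.Prime] (hℓ : 1 ≤ ℓ) (hq : q = p ^ ℓ)
    (hcard : Fintype.card Fq = q) [CharP (RatFunc.CompletionAtInfty Fq) p]
    (n : ℕ) (hn : 1 ≤ n) (u : RatFunc.CompletionAtInfty Fq)
    (hu : Valued.v u < (↑(Multiplicative.ofAdd (n : ℤ)) : WithZero (Multiplicative ℤ))) :
    letI : TopologicalSpace (PowerSeries (RatFunc.CompletionAtInfty Fq)) :=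
      TopologicalSpace.induced
        (fun f (k : ℕ) => (PowerSeries.coeff k) f) inferInstance
    let θ : RatFunc.CompletionAtInfty Fq := ratFuncToFqtInfty Fq RatFunc.X
    let g : ℕ → PowerSeries (RatFunc.CompletionAtInfty Fq) := fun i =>
      PowerSeries.C (u ^ q ^ (i + 1)) *
        ((PowerSeries.C (θ ^ q ^ (i + 1)) - PowerSeries.X)⁻¹) ^ n
    Summable g ∧
      (PowerSeries.X - PowerSeries.C (θ ^ q)) ^ n *
          ((∑' i, g i) - PowerSeries.map (iterateFrobenius (RatFunc.CompletionAtInfty Fq) p ℓ) (∑' i, g i))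
        = PowerSeries.C ((-1) ^ n * u ^ q) := by
  intro θ g
  letI : TopologicalSpace (PowerSeries (RatFunc.CompletionAtInfty Fq)) :=
    TopologicalSpace.induced
      (fun f (k : ℕ) => (PowerSeries.coeff k) f) inferInstance
  have hgi : ∀ i, g i =
      PowerSeries.C (u ^ q ^ (i + 1)) *
        ((PowerSeries.C (θ ^ q ^ (i + 1)) - PowerSeries.X)⁻¹) ^ n := fun _ => rfl
  -- basic numerology
  have hp2 : 2 ≤ p := (Fact.out : p.Prime).two_le
  have hq2 : 2 ≤ q := by
    rw [hq]
    calc 2 ≤ p := hp2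
    _ ≤ p ^ ℓ := Nat.le_self_pow (by omega) p
  -- the valuation of θ
  have hθv : Valued.v θ = ((Multiplicative.ofAdd (1 : ℤ) : Multiplicative ℤ) : WithZero (Multiplicative ℤ)) := by
    letI := RatFunc.inftyValued Fq
    have h := Valued.valuedCompletion_apply (K := RatFunc Fq) (RatFunc.X)
    rw [show (Valued.v (RatFunc.X : RatFunc Fq)) = _ from RatFunc.inftyValued.def Fq,
      ← RatFunc.inftyValuation_apply, RatFunc.inftyValuation.X] at h
    exact h
  have hθ0 : θ ≠ 0 := by
    intro h
    rw [h, map_zero] at hθv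
    exact (WithZero.coe_ne_zero (a := Multiplicative.ofAdd (1:ℤ))) hθv.symm
  -- the valuation bound on u
  have hu' : Valued.v u ≤ ((Multiplicative.ofAdd ((n : ℤ) - 1) : Multiplicative ℤ) : WithZero (Multiplicative ℤ)) := by
    rcases eq_or_ne u 0 with h | h
    · rw [h, map_zero]; exact zero_le'
    · have h0 : Valued.v u ≠ 0 := (Valuation.ne_zero_iff _).mpr h
      obtain ⟨x, hx⟩ := WithZero.ne_zero_iff_exists.mp h0
      rw [← hx] at hu ⊢
      rw [WithZero.coe_lt_coe] at hu
      rw [WithZero.coe_le_coe]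
      rw [← ofAdd_toAdd x] at hu ⊢
      rw [Multiplicative.ofAdd_lt] at hu
      rw [Multiplicative.ofAdd_le]
      omega
  -- rewrite g via the explicit geometric series
  have hcoeff : ∀ k i, PowerSeries.coeff k (g i)
      = u ^ q ^ (i + 1) * PowerSeries.coeff k
          ((PowerSeries.mk fun j => ((θ ^ q ^ (i + 1))⁻¹) ^ (j + 1)) ^ n) := by
    intro k i
    rw [hgi, aux_inv_C_sub_X (pow_ne_zero _ hθ0), PowerSeries.coeff_C_mul]
  -- valuation bound on coefficients
  have hvbound : ∀ k i, Valued.v (PowerSeries.coeff k (g i))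
      ≤ ((Multiplicative.ofAdd (-(i + 1 : ℤ)) : Multiplicative ℤ) : WithZero (Multiplicative ℤ)) := by
    intro k i
    rw [hcoeff k i, Valuation.map_mul]
    have hQ : (i + 1 : ℤ) ≤ (q ^ (i + 1) : ℕ) := by
      have h1 : i + 1 < 2 ^ (i + 1) := Nat.lt_two_pow_self
      have h2 : 2 ^ (i + 1) ≤ q ^ (i + 1) := Nat.pow_le_pow_left hq2 _
      exact_mod_cast le_of_lt (lt_of_lt_of_le h1 h2)
    have h1 : Valued.v (u ^ q ^ (i + 1))
        ≤ ((Multiplicative.ofAdd (((n : ℤ) - 1) * q ^ (i + 1)) : Multiplicative ℤ) : WithZero (Multiplicative ℤ)) := by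
      rw [Valuation.map_pow]
      refine le_trans (pow_le_pow_left' hu' _) ?_
      rw [← WithZero.coe_pow, WithZero.coe_le_coe, ← ofAdd_nsmul]
      rw [Multiplicative.ofAdd_le]
      simp [mul_comm]
    have h2 : Valued.v (PowerSeries.coeff k
          ((PowerSeries.mk fun j => ((θ ^ q ^ (i + 1))⁻¹) ^ (j + 1)) ^ n))
        ≤ ((Multiplicative.ofAdd (-((q ^ (i + 1) : ℕ) * (k + n) : ℤ)) : Multiplicative ℤ) : WithZero (Multiplicative ℤ)) := by
      refine le_trans (aux_coeff_pow_le Valued.v _ n k) ?_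
      rw [map_inv₀, Valuation.map_pow, hθv]
      rw [← WithZero.coe_pow, ← WithZero.coe_inv, ← WithZero.coe_pow, WithZero.coe_le_coe]
      rw [← ofAdd_nsmul, ← ofAdd_neg, ← ofAdd_nsmul, Multiplicative.ofAdd_le]
      simp only [nsmul_eq_mul, mul_one]
      push_cast
      apply le_of_eq
      ring
    refine le_trans (mul_le_mul' h1 h2) ?_
    rw [← WithZero.coe_mul, WithZero.coe_le_coe, ← ofAdd_add, Multiplicative.ofAdd_le]
    have hk : (1 : ℤ) ≤ (k : ℤ) + 1 := by omega
    have hQ' : ((i : ℤ) + 1) ≤ (q : ℤ) ^ (i + 1) := by exact_mod_cast hQ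
    have h3 : ((i : ℤ) + 1) ≤ (q : ℤ) ^ (i + 1) * ((k : ℤ) + 1) :=
      le_trans hQ' (le_mul_of_one_le_right (by positivity) hk)
    push_cast
    nlinarith [h3]
  -- coefficientwise summability
  have hsumk : ∀ k, Summable (fun i => PowerSeries.coeff k (g i)) := by
    intro k
    apply NonarchimedeanAddGroup.summable_of_tendsto_cofinite_zero
    rw [Nat.cofinite_eq_atTop]
    refine Filter.tendsto_def.mpr fun U hU => ?_
    obtain ⟨γ, hγ⟩ := aux_mem_nhds_zero Fq hU
    obtain ⟨x, hx⟩ := WithZero.ne_zero_iff_exists.mp γ.ne_zero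
    refine Filter.mem_of_superset (Filter.Ici_mem_atTop ((Multiplicative.toAdd x).natAbs)) ?_
    intro i hi
    apply hγ
    refine lt_of_le_of_lt (hvbound k i) ?_
    rw [← hx, WithZero.coe_lt_coe, ← ofAdd_toAdd x, Multiplicative.ofAdd_lt]
    have hi' : (Multiplicative.toAdd x).natAbs ≤ i := hi
    omega
  -- summability of g
  have hL : HasSum g (PowerSeries.mk fun k => ∑' i, PowerSeries.coeff k (g i)) := by
    refine (aux_hasSum_iff g _).mpr fun k => ?_
    rw [PowerSeries.coeff_mk]
    exact (hsumk k).hasSum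
  have hsummable : Summable g := ⟨_, hL⟩
  have hScoeff : ∀ k, PowerSeries.coeff k (∑' i, g i)
      = ∑' i, PowerSeries.coeff k (g i) := by
    intro k
    exact ((aux_hasSum_iff g (∑' i, g i)).mp hsummable.hasSum k).tsum_eq.symm
  refine ⟨hsummable, ?_⟩
  -- the Frobenius
  set φ := iterateFrobenius (RatFunc.CompletionAtInfty Fq) p ℓ with hφdef
  have hφx : ∀ x : RatFunc.CompletionAtInfty Fq, φ x = x ^ q := fun x => by
    rw [hφdef, iterateFrobenius_def, ← hq]
  have hφcont : Continuous φ := by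
    have h : (φ : RatFunc.CompletionAtInfty Fq → RatFunc.CompletionAtInfty Fq) = fun x => x ^ q := funext hφx
    rw [h]
    exact continuous_pow q
  -- Φ(g i) = g (i+1)
  have hΦg : ∀ i, PowerSeries.map φ (g i) = g (i + 1) := by
    intro i
    have hc2 : PowerSeries.constantCoeff
        (PowerSeries.C (θ ^ q ^ (i + 1 + 1)) - PowerSeries.X) ≠ 0 := by
      simpa using pow_ne_zero _ hθ0
    have hmapsub : PowerSeries.map φ
        (PowerSeries.C (θ ^ q ^ (i + 1)) - PowerSeries.X)
        = PowerSeries.C (θ ^ q ^ (i + 1 + 1)) - PowerSeries.X := by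
      rw [map_sub, PowerSeries.map_C, PowerSeries.map_X, hφx, ← pow_mul, ← pow_succ]
    have hinv : PowerSeries.map φ
        ((PowerSeries.C (θ ^ q ^ (i + 1)) - PowerSeries.X)⁻¹)
        = (PowerSeries.C (θ ^ q ^ (i + 1 + 1)) - PowerSeries.X)⁻¹ := by
      rw [eq_comm, PowerSeries.inv_eq_iff_mul_eq_one hc2, ← hmapsub, ← map_mul,
        PowerSeries.inv_mul_cancel _ (by simpa using pow_ne_zero _ hθ0), map_one]
    rw [hgi i, hgi (i + 1), map_mul, map_pow (PowerSeries.map φ) _ n, hinv,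
      PowerSeries.map_C, hφx (u ^ q ^ (i + 1)), ← pow_mul, ← pow_succ]
  -- the key identity L - Φ L = g 0
  have hkey : (∑' i, g i) - PowerSeries.map φ (∑' i, g i) = g 0 := by
    ext k
    rw [map_sub, PowerSeries.coeff_map, hScoeff k]
    have h1 : φ (∑' i, PowerSeries.coeff k (g i))
        = ∑' i, φ (PowerSeries.coeff k (g i)) :=
      ((hsumk k).hasSum.map φ.toAddMonoidHom hφcont).tsum_eq.symm
    rw [h1]
    have h2 : ∀ i, φ (PowerSeries.coeff k (g i))
        = PowerSeries.coeff k (g (i + 1)) := fun i => by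
      rw [← PowerSeries.coeff_map, hΦg]
    rw [tsum_congr h2, (hsumk k).tsum_eq_zero_add]
    simp
  rw [hkey]
  -- final algebra
  have hmul : (PowerSeries.C (θ ^ q) - PowerSeries.X)
      * (PowerSeries.C (θ ^ q) - PowerSeries.X)⁻¹ = 1 :=
    PowerSeries.mul_inv_cancel _ (by simpa using pow_ne_zero _ hθ0)
  have hg0 : g 0 = PowerSeries.C (u ^ q) *
      ((PowerSeries.C (θ ^ q) - PowerSeries.X)⁻¹) ^ n := by
    rw [hgi]; norm_num
  rw [hg0]
  have h4 : (PowerSeries.X - PowerSeries.C (θ ^ q)) ^ n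
      = (-1 : PowerSeries (RatFunc.CompletionAtInfty Fq)) ^ n
        * (PowerSeries.C (θ ^ q) - PowerSeries.X) ^ n := by
    rw [← neg_pow, neg_sub]
  calc (PowerSeries.X - PowerSeries.C (θ ^ q)) ^ n *
        (PowerSeries.C (u ^ q) *
          ((PowerSeries.C (θ ^ q) - PowerSeries.X)⁻¹) ^ n)
      = (-1) ^ n * PowerSeries.C (u ^ q) *
        ((PowerSeries.C (θ ^ q) - PowerSeries.X) ^ n *
          ((PowerSeries.C (θ ^ q) - PowerSeries.X)⁻¹) ^ n) := by
        rw [h4]; ring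
    _ = (-1) ^ n * PowerSeries.C (u ^ q) *
        ((PowerSeries.C (θ ^ q) - PowerSeries.X) *
          (PowerSeries.C (θ ^ q) - PowerSeries.X)⁻¹) ^ n := by
        rw [mul_pow]
    _ = PowerSeries.C ((-1) ^ n * u ^ q) := by
        rw [hmul, one_pow, mul_one]
        simp
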